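/- Let P = {1,...,n} and m < n/2. Consider the n - m bicolorings B_1,...,B_{n-m} where for i ≤ n-2m+1, B_i colors the leftmost m+i-1 points red and the rest blue, and for i ≥ n-2m+2, B_i colors the points in {i-n+2m, ..., i+m-1} red and the remaining m points blue. Then any family of intervals that contains a balanced interval for each B_i has size at least n - m. -/

import Mathlib

/-- Red points of the bicoloring `B_i` from Theorem 3(a): for
`i ≤ n - 2m + 1`, the leftmost `m + i - 1` points are red; for larger `i`,
the points in `{i - n + 2m, …, i + m - 1}` are red (the condition
`i + 2m ≤ p + n` encodes `i - n + 2m ≤ p` in `ℕ`). -/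
def mRestrictedRed (n m i p : ℕ) : Prop :=
  if i ≤ n - 2 * m + 1 then p ≤ m + i - 1
  else (i + 2 * m ≤ p + n ∧ p ≤ i + m - 1)

instance (n m i p : ℕ) : Decidable (mRestrictedRed n m i p) := by
  unfold mRestrictedRed; infer_instance

/-- For `P = {1,…,n}` and `m < n/2`, any family of intervals containing, for
each of the `n - m` specific `m`-restricted bicolorings `B_1, …, B_{n-m}`, a
balanced interval (equally many, and at least one of each, red and blue
points of `P`), must have size at least `n - m`. -/
lemma key_lemma (n m i : ℕ) (hm : 1 ≤ m) (hmn : 2 * m < n) (hi1 : 1 ≤ i) (hi2 : i ≤ n - m)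
    (I : ℝ × ℝ)
    (hbal : ((Finset.Icc 1 n).filter
        (fun (p : ℕ) => I.1 ≤ (p : ℝ) ∧ (p : ℝ) ≤ I.2 ∧ mRestrictedRed n m i p)).card =
      ((Finset.Icc 1 n).filter
        (fun (p : ℕ) => I.1 ≤ (p : ℝ) ∧ (p : ℝ) ≤ I.2 ∧ ¬ mRestrictedRed n m i p)).card)
    (hpos : 0 < ((Finset.Icc 1 n).filter
        (fun (p : ℕ) => I.1 ≤ (p : ℝ) ∧ (p : ℝ) ≤ I.2 ∧ mRestrictedRed n m i p)).card) :
    ∃ a b : ℕ,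
      ((Finset.Icc 1 n).filter (fun (p : ℕ) => I.1 ≤ (p : ℝ) ∧ (p : ℝ) ≤ I.2)) = Finset.Icc a b
      ∧ a ≤ b ∧ (a + b + 1 = 2 * (m + i) ∨ a + b + 1 + 2 * n = 2 * (i + 2 * m)) := by
  classical
  set T := (Finset.Icc 1 n).filter (fun (p : ℕ) => I.1 ≤ (p : ℝ) ∧ (p : ℝ) ≤ I.2) with hT
  have hfilt : ∀ (C : ℕ → Prop) (_ : DecidablePred C),
      (Finset.Icc 1 n).filter (fun (p : ℕ) => I.1 ≤ (p : ℝ) ∧ (p : ℝ) ≤ I.2 ∧ C p)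
        = T.filter C := by
    intro C hC
    rw [hT, Finset.filter_filter]
    apply Finset.filter_congr
    intro x _
    simp [and_assoc]
  rw [hfilt _ inferInstance, hfilt _ inferInstance] at hbal
  rw [hfilt _ inferInstance] at hpos
  have hTcard : (T.filter (fun p => mRestrictedRed n m i p)).card
      + (T.filter (fun p => ¬ mRestrictedRed n m i p)).card = T.card :=
    Finset.card_filter_add_card_filter_not _
  have hne : T.Nonempty := by
    rw [← Finset.card_pos]; omega
  set a := T.min' hne with ha
  set b := T.max' hne with hb
  have haT : a ∈ T := T.min'_mem hne
  have hbT : b ∈ T := T.max'_mem hne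
  have haspec : 1 ≤ a ∧ a ≤ n ∧ I.1 ≤ (a:ℝ) ∧ (a:ℝ) ≤ I.2 := by
    have := haT; rw [hT, Finset.mem_filter, Finset.mem_Icc] at this; tauto
  have hbspec : 1 ≤ b ∧ b ≤ n ∧ I.1 ≤ (b:ℝ) ∧ (b:ℝ) ≤ I.2 := by
    have := hbT; rw [hT, Finset.mem_filter, Finset.mem_Icc] at this; tauto
  have hab : a ≤ b := T.min'_le b hbT
  have hTIcc : T = Finset.Icc a b := by
    ext x
    rw [hT, Finset.mem_filter, Finset.mem_Icc, Finset.mem_Icc]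
    constructor
    · intro hx
      have h1 : a ≤ x := T.min'_le x (by rw [hT, Finset.mem_filter, Finset.mem_Icc]; exact hx)
      have h2 : x ≤ b := T.le_max' x (by rw [hT, Finset.mem_filter, Finset.mem_Icc]; exact hx)
      exact ⟨h1, h2⟩
    · intro ⟨h1, h2⟩
      refine ⟨⟨le_trans haspec.1 h1, le_trans h2 hbspec.2.1⟩, ?_, ?_⟩
      · exact le_trans haspec.2.2.1 (by exact_mod_cast h1)
      · exact le_trans (by exact_mod_cast h2) hbspec.2.2.2
  refine ⟨a, b, hTIcc, hab, ?_⟩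
  have hTc : T.card = b + 1 - a := by rw [hTIcc, Nat.card_Icc]
  rcases le_or_gt i (n - 2 * m + 1) with hc | hc
  · -- case A: red = p ≤ m + i - 1
    have hred : T.filter (fun p => mRestrictedRed n m i p) = Finset.Icc a (min b (m + i - 1)) := by
      rw [hTIcc]
      ext x
      simp only [Finset.mem_filter, Finset.mem_Icc, mRestrictedRed, if_pos hc]
      omega
    rw [hred, Nat.card_Icc] at hbal hpos hTcard
    left; omega
  · -- case B
    have hc' : ¬ (i ≤ n - 2 * m + 1) := not_le.mpr hc
    have hred : T.filter (fun p => mRestrictedRed n m i p)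
        = Finset.Icc (max a (i + 2 * m - n)) (min b (i + m - 1)) := by
      rw [hTIcc]
      ext x
      simp only [Finset.mem_filter, Finset.mem_Icc, mRestrictedRed, if_neg hc']
      omega
    rw [hred, Nat.card_Icc] at hbal hpos hTcard
    have ha1 : 1 ≤ a := haspec.1
    have hbn : b ≤ n := hbspec.2.1
    omega

theorem stmt_9 (n m : ℕ) (hm : 1 ≤ m) (hmn : 2 * m < n) (F : Finset (ℝ × ℝ))
    (h : ∀ i : ℕ, 1 ≤ i → i ≤ n - m → ∃ I ∈ F,
      ((Finset.Icc 1 n).filter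
        (fun (p : ℕ) => I.1 ≤ (p : ℝ) ∧ (p : ℝ) ≤ I.2 ∧
          mRestrictedRed n m i p)).card =
      ((Finset.Icc 1 n).filter
        (fun (p : ℕ) => I.1 ≤ (p : ℝ) ∧ (p : ℝ) ≤ I.2 ∧
          ¬ mRestrictedRed n m i p)).card ∧
      0 < ((Finset.Icc 1 n).filter
        (fun (p : ℕ) => I.1 ≤ (p : ℝ) ∧ (p : ℝ) ≤ I.2 ∧
          mRestrictedRed n m i p)).card) :
    n - m ≤ F.card := by
  classical
  have hcard : (Finset.Icc 1 (n - m)).card = n - m := by rw [Nat.card_Icc]; omega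
  rw [← hcard]
  apply Finset.card_le_card_of_injOn
    (fun i => if h' : 1 ≤ i ∧ i ≤ n - m then (h i h'.1 h'.2).choose else (0, 0))
  · intro i hi
    rw [Finset.mem_coe, Finset.mem_Icc] at hi
    simp only [dif_pos hi]
    exact (h i hi.1 hi.2).choose_spec.1
  · intro i hi j hj hij
    rw [Finset.mem_coe, Finset.mem_Icc] at hi hj
    simp only [dif_pos hi, dif_pos hj] at hij
    obtain ⟨hFi, hbi, hpi⟩ := (h i hi.1 hi.2).choose_spec
    obtain ⟨hFj, hbj, hpj⟩ := (h j hj.1 hj.2).choose_spec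
    obtain ⟨a, b, hT1, hab1, hd1⟩ := key_lemma n m i hm hmn hi.1 hi.2 _ hbi hpi
    obtain ⟨a', b', hT2, hab2, hd2⟩ := key_lemma n m j hm hmn hj.1 hj.2 _ hbj hpj
    rw [hij] at hT1
    rw [hT2] at hT1
    have h1 : a ∈ Finset.Icc a' b' := by rw [hT1]; exact Finset.mem_Icc.mpr ⟨le_refl a, hab1⟩
    have h2 : b ∈ Finset.Icc a' b' := by rw [hT1]; exact Finset.mem_Icc.mpr ⟨hab1, le_refl b⟩
    have h3 : a' ∈ Finset.Icc a b := by rw [← hT1]; exact Finset.mem_Icc.mpr ⟨le_refl a', hab2⟩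
    have h4 : b' ∈ Finset.Icc a b := by rw [← hT1]; exact Finset.mem_Icc.mpr ⟨hab2, le_refl b'⟩
    rw [Finset.mem_Icc] at h1 h2 h3 h4
    omega
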